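/- arXiv:0901.1209 — 4 statements merged into one kernel-verified Lean document; each statement's English description precedes it below -/
import Mathlib

section
/- Let A, B, C be rings (not necessarily commutative), f : B → A and g : B → C ring homomorphisms, and φ : A → B a homomorphism of additive abelian groups such that: (i) g is surjective and the kernel of g equals the image of φ (i.e. the sequence A → B → C → 0 is exact), and (ii) the composite f ∘ φ : A → A is multiplication by a central element a ∈ A which is not a zero divisor. Then there is a unique ring homomorphism q : C → A/(a) with q ∘ g = p ∘ f (where p : A → A/(a) is the canonical projection and (a) is the two-sided ideal generated by a), and the map b ↦ (f(b), g(b)) is a ring isomorphism from B onto the fiber product A ×_{A/(a)} C taken along p and q. -/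
/-- **Lemma (gluing lemma).** Let `A, B, C` be (not necessarily commutative) rings,
`f : B → A` and `g : B → C` ring homomorphisms, and `φ : A → B` a homomorphism of
additive abelian groups such that the sequence `A → B → C → 0` is exact and
`f ∘ φ` is multiplication by a central non-zero-divisor `a ∈ A`.  Then there is a
unique ring homomorphism `q : C → A/(a)` with `q ∘ g = p ∘ f` (where `p : A → A/(a)`
is the projection onto the quotient by the two-sided ideal generated by `a`), and
`b ↦ (f b, g b)` is a ring isomorphism of `B` onto the fiber product
`A ×_{A/(a)} C` taken along `p` and `q`. -/
theorem stmt0 {A B C : Type*} [Ring A] [Ring B] [Ring C]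
    (f : B →+* A) (g : B →+* C) (φ : A →+ B)
    (hg_surj : Function.Surjective g)
    (h_exact : ∀ b : B, g b = 0 ↔ b ∈ Set.range φ)
    (a : A)
    (h_central : ∀ x : A, a * x = x * a)
    (h_mul : ∀ x : A, f (φ x) = a * x)
    (h_nzd_left : ∀ x : A, a * x = 0 → x = 0)
    (h_nzd_right : ∀ x : A, x * a = 0 → x = 0) :
    letI p : A →+* (TwoSidedIdeal.span {a}).ringCon.Quotient :=
      (TwoSidedIdeal.span {a}).ringCon.mk'
    (∃! q : C →+* (TwoSidedIdeal.span {a}).ringCon.Quotient,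
        q.comp g = p.comp f) ∧
    ∀ q : C →+* (TwoSidedIdeal.span {a}).ringCon.Quotient,
      ∀ hq : q.comp g = p.comp f,
      Function.Bijective
        ((f.prod g).codRestrict
          ((p.comp (RingHom.fst A C)).eqLocus (q.comp (RingHom.snd A C)))
          (fun b => show p (f b) = q (g b) from (RingHom.congr_fun hq b).symm)) := by
  set p : A →+* (TwoSidedIdeal.span {a}).ringCon.Quotient := (TwoSidedIdeal.span {a}).ringCon.mk' with hp
  -- characterize span {a}
  have I0 : { I : TwoSidedIdeal A // ∀ x, x ∈ I ↔ ∃ t : A, x = a * t } := by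
    refine ⟨TwoSidedIdeal.mk' {x | ∃ t : A, x = a * t}
      ⟨0, (mul_zero a).symm⟩
      (by rintro x y ⟨t, rfl⟩ ⟨u, rfl⟩; exact ⟨t + u, (mul_add a t u).symm⟩)
      (by rintro x ⟨t, rfl⟩; exact ⟨-t, (mul_neg a t).symm⟩)
      (by rintro x y ⟨t, rfl⟩; exact ⟨x * t, by rw [← mul_assoc, ← h_central, mul_assoc]⟩)
      (by rintro x y ⟨t, rfl⟩; exact ⟨t * y, mul_assoc a t y⟩), ?_⟩
    intro x
    exact TwoSidedIdeal.mem_mk' _ _ _ _ _ _ x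
  have hspan : ∀ x : A, x ∈ TwoSidedIdeal.span {a} ↔ ∃ t : A, x = a * t := by
    intro x
    constructor
    · intro hx
      exact (I0.2 x).mp (TwoSidedIdeal.mem_span_iff.mp hx I0.1
        (by intro z hz
            simp only [Set.mem_singleton_iff] at hz
            subst hz
            exact (I0.2 _).mpr ⟨1, (mul_one _).symm⟩))
    · rintro ⟨t, rfl⟩
      exact TwoSidedIdeal.mul_mem_right _ _ _ (TwoSidedIdeal.subset_span rfl)
  have hp_eq : ∀ x y : A, p x = p y ↔ x - y ∈ TwoSidedIdeal.span {a} := by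
    intro x y
    rw [← TwoSidedIdeal.rel_iff]
    exact RingCon.eq _
  -- well definedness
  have hwd : ∀ b b' : B, g b = g b' → p (f b) = p (f b') := by
    intro b b' h
    have : g (b - b') = 0 := by rw [map_sub, h, sub_self]
    obtain ⟨x, hx⟩ := (h_exact _).mp this
    rw [hp_eq, ← map_sub, ← hx, h_mul, hspan]
    exact ⟨x, rfl⟩
  -- construct q
  set s : C → B := Function.surjInv hg_surj with hs
  have hgs : Function.RightInverse s g := Function.surjInv_eq hg_surj
  have hker : RingHom.ker g ≤ RingHom.ker (p.comp f) := by
    intro b hb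
    rw [RingHom.mem_ker] at hb ⊢
    have := hwd b 0 (by rw [hb, map_zero])
    simpa using this
  set q0 : C →+* (TwoSidedIdeal.span {a}).ringCon.Quotient :=
    g.liftOfRightInverse s hgs ⟨p.comp f, hker⟩ with hq0def
  have hq0 : q0.comp g = p.comp f := by
    ext b
    exact g.liftOfRightInverse_comp_apply s hgs ⟨p.comp f, hker⟩ b
  constructor
  · refine ⟨q0, hq0, ?_⟩
    intro q' hq'
    ext c
    obtain ⟨b, rfl⟩ := hg_surj c
    exact (RingHom.congr_fun hq' b).trans (RingHom.congr_fun hq0 b).symm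
  · intro q hq
    constructor
    · intro b b' h
      have h1 : f b = f b' := congrArg Prod.fst (congrArg Subtype.val h)
      have h2 : g b = g b' := congrArg Prod.snd (congrArg Subtype.val h)
      have : g (b - b') = 0 := by rw [map_sub, h2, sub_self]
      obtain ⟨x, hx⟩ := (h_exact _).mp this
      have : a * x = 0 := by rw [← h_mul, hx, map_sub, h1, sub_self]
      have hx0 : x = 0 := h_nzd_left _ this
      have : b - b' = 0 := by rw [← hx, hx0, map_zero]
      exact sub_eq_zero.mp this
    · rintro ⟨⟨x, c⟩, hxc⟩
      have hxc' : p x = q c := hxc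
      obtain ⟨b0, rfl⟩ := hg_surj c
      have : p x = p (f b0) := by
        rw [hxc']
        have h3 := RingHom.congr_fun hq b0
        simp only [RingHom.comp_apply] at h3
        exact h3
      rw [hp_eq, hspan] at this
      obtain ⟨t, ht⟩ := this
      refine ⟨b0 + φ t, ?_⟩
      have hft : f (b0 + φ t) = x := by
        rw [map_add, h_mul, ← ht]; abel
      have hgt : g (b0 + φ t) = g b0 := by
        have : g (φ t) = 0 := (h_exact _).mpr ⟨t, rfl⟩
        rw [map_add, this, add_zero]
      exact Subtype.ext (Prod.ext hft hgt)
end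

section
/- Let τ be the ℚ-algebra automorphism of the polynomial ring ℚ[r, t₁, t₂] determined by τ(r) = −r, τ(t₁) = t₂, τ(t₂) = t₁. Then the subalgebra of τ-invariant polynomials equals the ℚ-subalgebra generated by the four elements u₁ = t₁ + t₂, u₂ = t₁² + t₂², u₃ = r(t₁ − t₂), and u₄ = r². -/
open MvPolynomial

/-- The ℚ-algebra endomorphism of `ℚ[r, t₁, t₂]` (`r = X 0`, `t₁ = X 1`, `t₂ = X 2`)
with `r ↦ −r`, `t₁ ↦ t₂`, `t₂ ↦ t₁`. -/
noncomputable def sigma : MvPolynomial (Fin 3) ℚ →ₐ[ℚ] MvPolynomial (Fin 3) ℚ :=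
  aeval ![-X 0, X 2, X 1]

lemma sigma_invol : sigma.comp sigma = AlgHom.id ℚ (MvPolynomial (Fin 3) ℚ) := by
  apply MvPolynomial.algHom_ext
  intro i
  fin_cases i <;> simp [sigma]

/-- The ℚ-algebra automorphism `τ` of `ℚ[r, t₁, t₂]` determined by
`τ(r) = −r`, `τ(t₁) = t₂`, `τ(t₂) = t₁`. -/
noncomputable def tau : MvPolynomial (Fin 3) ℚ ≃ₐ[ℚ] MvPolynomial (Fin 3) ℚ :=
  AlgEquiv.ofAlgHom sigma sigma sigma_invol sigma_invol

lemma tau_X0 : tau (X 0 : MvPolynomial (Fin 3) ℚ) = -X 0 := by simp [tau, sigma]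
lemma tau_X1 : tau (X 1 : MvPolynomial (Fin 3) ℚ) = X 2 := by simp [tau, sigma]
lemma tau_X2 : tau (X 2 : MvPolynomial (Fin 3) ℚ) = X 1 := by simp [tau, sigma]

noncomputable abbrev Ainv : Subalgebra ℚ (MvPolynomial (Fin 3) ℚ) :=
  Algebra.adjoin ℚ
    ({X 1 + X 2, X 1 ^ 2 + X 2 ^ 2, X 0 * (X 1 - X 2), X 0 ^ 2} :
      Set (MvPolynomial (Fin 3) ℚ))

lemma mem_u1 : (X 1 + X 2 : MvPolynomial (Fin 3) ℚ) ∈ Ainv :=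
  Algebra.subset_adjoin (by simp)
lemma mem_u2 : (X 1 ^ 2 + X 2 ^ 2 : MvPolynomial (Fin 3) ℚ) ∈ Ainv :=
  Algebra.subset_adjoin (by simp)
lemma mem_u3 : (X 0 * (X 1 - X 2) : MvPolynomial (Fin 3) ℚ) ∈ Ainv :=
  Algebra.subset_adjoin (by simp)
lemma mem_u4 : (X 0 ^ 2 : MvPolynomial (Fin 3) ℚ) ∈ Ainv :=
  Algebra.subset_adjoin (by simp)

lemma mem_d2 : ((X 1 - X 2) ^ 2 : MvPolynomial (Fin 3) ℚ) ∈ Ainv := by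
  have h : ((X 1 - X 2) ^ 2 : MvPolynomial (Fin 3) ℚ)
      = (X 1 ^ 2 + X 2 ^ 2) + (X 1 ^ 2 + X 2 ^ 2) - (X 1 + X 2) ^ 2 := by ring
  rw [h]
  exact Ainv.sub_mem (Ainv.add_mem mem_u2 mem_u2) (Ainv.pow_mem mem_u1 2)

lemma tau_of_mem {P : MvPolynomial (Fin 3) ℚ} (h : P ∈ Ainv) : tau P = P := by
  induction h using Algebra.adjoin_induction with
  | mem x hx =>
    simp only [Set.mem_insert_iff, Set.mem_singleton_iff] at hx
    rcases hx with h | h | h | h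
    · subst h; rw [map_add, tau_X1, tau_X2]; ring
    · subst h; rw [map_add, map_pow, map_pow, tau_X1, tau_X2]; ring
    · subst h; rw [map_mul, map_sub, tau_X0, tau_X1, tau_X2]; ring
    · subst h; rw [map_pow, tau_X0]; ring
  | algebraMap r => exact AlgEquiv.commutes _ r
  | add x y _ _ hx hy => rw [map_add, hx, hy]
  | mul x y _ _ hx hy => rw [map_mul, hx, hy]

/-- Every polynomial decomposes as `e + f·r + g·d` with `e,f,g ∈ Ainv`. -/
def good (P : MvPolynomial (Fin 3) ℚ) : Prop :=
  ∃ e f g : MvPolynomial (Fin 3) ℚ, e ∈ Ainv ∧ f ∈ Ainv ∧ g ∈ Ainv ∧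
    P = e + f * X 0 + g * (X 1 - X 2)

lemma good_add {P Q} (hP : good P) (hQ : good Q) : good (P + Q) := by
  obtain ⟨e, f, g, he, hf, hg, rfl⟩ := hP
  obtain ⟨e', f', g', he', hf', hg', rfl⟩ := hQ
  exact ⟨e + e', f + f', g + g', Ainv.add_mem he he', Ainv.add_mem hf hf',
    Ainv.add_mem hg hg', by ring⟩

lemma good_smul (q : ℚ) {P} (hP : good P) : good (C q * P) := by
  obtain ⟨e, f, g, he, hf, hg, rfl⟩ := hP
  have hq : (C q : MvPolynomial (Fin 3) ℚ) ∈ Ainv := Ainv.algebraMap_mem q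
  exact ⟨C q * e, C q * f, C q * g, Ainv.mul_mem hq he, Ainv.mul_mem hq hf,
    Ainv.mul_mem hq hg, by ring⟩

lemma good_mul_X0 {P} (hP : good P) : good (P * X 0) := by
  obtain ⟨e, f, g, he, hf, hg, rfl⟩ := hP
  exact ⟨f * X 0 ^ 2 + g * (X 0 * (X 1 - X 2)), e, 0,
    Ainv.add_mem (Ainv.mul_mem hf mem_u4) (Ainv.mul_mem hg mem_u3), he,
    Ainv.zero_mem, by ring⟩

lemma good_mul_s {P} (hP : good P) : good (P * (X 1 + X 2)) := by
  obtain ⟨e, f, g, he, hf, hg, rfl⟩ := hP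
  exact ⟨e * (X 1 + X 2), f * (X 1 + X 2), g * (X 1 + X 2),
    Ainv.mul_mem he mem_u1, Ainv.mul_mem hf mem_u1, Ainv.mul_mem hg mem_u1, by ring⟩

lemma good_mul_d {P} (hP : good P) : good (P * (X 1 - X 2)) := by
  obtain ⟨e, f, g, he, hf, hg, rfl⟩ := hP
  exact ⟨f * (X 0 * (X 1 - X 2)) + g * (X 1 - X 2) ^ 2, 0, e,
    Ainv.add_mem (Ainv.mul_mem hf mem_u3) (Ainv.mul_mem hg mem_d2),
    Ainv.zero_mem, he, by ring⟩

lemma good_all (P : MvPolynomial (Fin 3) ℚ) : good P := by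
  induction P using MvPolynomial.induction_on with
  | C a =>
    exact ⟨C a, 0, 0, Ainv.algebraMap_mem a, Ainv.zero_mem, Ainv.zero_mem, by ring⟩
  | add p q hp hq => exact good_add hp hq
  | mul_X p n hp =>
    fin_cases n
    · exact good_mul_X0 hp
    · show good (p * X 1)
      have h1 : p * X 1 = C (1/2 : ℚ) * (p * (X 1 + X 2) + p * (X 1 - X 2)) := by
        rw [show (C (1/2 : ℚ) : MvPolynomial (Fin 3) ℚ) = C (1/2) from rfl]
        rw [show (p * (X 1 + X 2) + p * (X 1 - X 2) : MvPolynomial (Fin 3) ℚ)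
            = C (2 : ℚ) * (p * X 1) by push_cast [map_ofNat]; ring]
        rw [← mul_assoc, ← map_mul]; norm_num
      rw [h1]
      exact good_smul _ (good_add (good_mul_s hp) (good_mul_d hp))
    · show good (p * X 2)
      have h1 : p * X 2 = C (1/2 : ℚ) * (p * (X 1 + X 2) - p * (X 1 - X 2)) := by
        rw [show (p * (X 1 + X 2) - p * (X 1 - X 2) : MvPolynomial (Fin 3) ℚ)
            = C (2 : ℚ) * (p * X 2) by push_cast [map_ofNat]; ring]
        rw [← mul_assoc, ← map_mul]; norm_num
      rw [h1]
      have : good (p * (X 1 + X 2) - p * (X 1 - X 2)) := by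
        have := good_add (good_mul_s hp) (good_smul (-1) (good_mul_d hp))
        simpa [sub_eq_add_neg, map_neg] using this
      exact good_smul _ this
    
/-- The subalgebra of `τ`-invariant polynomials in `ℚ[r, t₁, t₂]` is generated over ℚ
by `u₁ = t₁ + t₂`, `u₂ = t₁² + t₂²`, `u₃ = r(t₁ − t₂)` and `u₄ = r²`. -/
theorem stmt4 :
    ∀ P : MvPolynomial (Fin 3) ℚ,
      tau P = P ↔
        P ∈ Algebra.adjoin ℚ
          ({X 1 + X 2, X 1 ^ 2 + X 2 ^ 2, X 0 * (X 1 - X 2), X 0 ^ 2} :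
            Set (MvPolynomial (Fin 3) ℚ)) := by
  intro P
  constructor
  · intro hP
    obtain ⟨e, f, g, he, hf, hg, rfl⟩ := good_all P
    have htau : tau (e + f * X 0 + g * (X 1 - X 2))
        = e - (f * X 0 + g * (X 1 - X 2)) := by
      rw [map_add, map_add, map_mul, map_mul, map_sub, tau_X0, tau_X1, tau_X2,
        tau_of_mem he, tau_of_mem hf, tau_of_mem hg]
      ring
    rw [htau] at hP
    have h2 : (2 : MvPolynomial (Fin 3) ℚ) * (f * X 0 + g * (X 1 - X 2)) = 0 := by
      linear_combination -hP
    have hz : f * X 0 + g * (X 1 - X 2) = 0 := by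
      rcases mul_eq_zero.mp h2 with h | h
      · exact absurd h two_ne_zero
      · exact h
    have heq : e + f * X 0 + g * (X 1 - X 2) = e := by linear_combination hz
    rw [heq]
    exact he
  · intro hP
    exact tau_of_mem hP
end

section
/- Let ψ : ℚ[x₁, x₂, x₃, x₄] → ℚ[r, t₁, t₂] be the ℚ-algebra homomorphism determined by x₁ ↦ −(t₁ + t₂), x₂ ↦ −(t₁² + t₂²), x₃ ↦ (t₁ − r)(t₂ + r), x₄ ↦ r(t₁ − t₂). Then the kernel of ψ is the principal ideal generated by the polynomial (2x₄ + (2x₂ + x₁²))² − (2x₂ + x₁²)(4x₃ − x₁²). -/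
open MvPolynomial
noncomputable section
abbrev A4 := MvPolynomial (Fin 4) ℚ
abbrev A3 := MvPolynomial (Fin 3) ℚ
def ψ₀ : A4 →ₐ[ℚ] A3 := aeval ![-X 0, -(X 1)^2, -(X 2)^2, -(X 1 * X 2)]
def jj : A3 →ₐ[ℚ] A3 := aeval ![-X 0, -(X 1)^2, -(X 2)^2]
def ττ : A3 →ₐ[ℚ] A3 := aeval ![X 0, -X 1, X 2]

lemma tau_j : ττ.comp jj = jj := by
  apply MvPolynomial.algHom_ext; intro i
  fin_cases i <;> simp [ττ, jj]

lemma psi0_rename : ψ₀.comp (rename (Fin.castSucc : Fin 3 → Fin 4)) = jj := by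
  apply MvPolynomial.algHom_ext; intro i
  fin_cases i <;> simp [ψ₀, jj] <;> rfl

lemma cs0 : (Fin.castSucc 0 : Fin 4) = 0 := rfl
lemma cs1 : (Fin.castSucc 1 : Fin 4) = 1 := rfl
lemma cs2 : (Fin.castSucc 2 : Fin 4) = 2 := rfl
lemma mk0 : (⟨0, by norm_num⟩ : Fin 4) = 0 := rfl
lemma mk1 : (⟨1, by norm_num⟩ : Fin 4) = 1 := rfl
lemma mk2 : (⟨2, by norm_num⟩ : Fin 4) = 2 := rfl
lemma mk3 : (⟨3, by norm_num⟩ : Fin 4) = 3 := rfl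

-- division
lemma div_lemma (F : A4) : ∃ q P Q, F = (X 3 ^ 2 - X 1 * X 2) * q
    + rename (Fin.castSucc : Fin 3 → Fin 4) P + X 3 * rename Fin.castSucc Q := by
  induction F using MvPolynomial.induction_on with
  | C a => exact ⟨0, C a, 0, by simp [rename_C]⟩
  | add p q hp hq =>
    obtain ⟨q1, P1, Q1, h1⟩ := hp; obtain ⟨q2, P2, Q2, h2⟩ := hq
    exact ⟨q1 + q2, P1 + P2, Q1 + Q2, by rw [h1, h2]; simp only [map_add]; ring⟩
  | mul_X p i hp =>
    obtain ⟨q, P, Q, h⟩ := hp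
    fin_cases i
    · exact ⟨q * X 0, P * X 0, Q * X 0, by
        rw [h]; simp only [map_mul, rename_X, cs0, cs1, cs2, mk0, mk1, mk2, mk3]; ring⟩
    · exact ⟨q * X 1, P * X 1, Q * X 1, by
        rw [h]; simp only [map_mul, rename_X, cs0, cs1, cs2, mk0, mk1, mk2, mk3]; ring⟩
    · exact ⟨q * X 2, P * X 2, Q * X 2, by
        rw [h]; simp only [map_mul, rename_X, cs0, cs1, cs2, mk0, mk1, mk2, mk3]; ring⟩
    · exact ⟨q * X 3 + rename Fin.castSucc Q, X 1 * X 2 * Q, P, by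
        rw [h]; simp only [map_mul, rename_X, cs0, cs1, cs2, mk0, mk1, mk2, mk3]; ring⟩

abbrev KK := AlgebraicClosure ℚ

instance : Infinite KK := Infinite.of_injective _ (algebraMap ℚ KK).injective

lemma j_inj_aux (P : A3) (h : jj P = 0) : P = 0 := by
  have hz : ∀ z : Fin 3 → KK, aeval z P = 0 := by
    intro z
    obtain ⟨b, hb⟩ := IsAlgClosed.exists_pow_nat_eq (k := KK) (-(z 1)) (n := 2) (by norm_num)
    obtain ⟨c, hc⟩ := IsAlgClosed.exists_pow_nat_eq (k := KK) (-(z 2)) (n := 2) (by norm_num)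
    have key : ((aeval ![-(z 0), b, c] : A3 →ₐ[ℚ] KK).comp jj) = aeval z := by
      apply MvPolynomial.algHom_ext; intro i
      fin_cases i <;>
        simp [jj, hb, hc] <;>
        ring_nf <;> simp [hb, hc] <;> ring
    have := DFunLike.congr_fun key P
    simp only [AlgHom.comp_apply, h, map_zero] at this
    exact this.symm
  have hm : map (algebraMap ℚ KK) P = 0 := by
    apply MvPolynomial.funext (q := 0); intro x
    have := hz x
    rw [aeval_def, eval₂_eq_eval_map] at this
    simpa using this
  exact MvPolynomial.map_injective _ (algebraMap ℚ KK).injective (by simpa using hm)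

lemma core (F : A4) (h : ψ₀ F = 0) : F ∈ Ideal.span {(X 3 ^ 2 - X 1 * X 2 : A4)} := by
  obtain ⟨q, P, Q, rfl⟩ := div_lemma F
  have hg : ψ₀ (X 3 ^ 2 - X 1 * X 2 : A4) = 0 := by simp [ψ₀]; ring
  have hren : ∀ R : A3, ψ₀ (rename Fin.castSucc R) = jj R := fun R =>
    DFunLike.congr_fun psi0_rename R
  have hX3 : ψ₀ (X 3 : A4) = -(X 1 * X 2) := by simp [ψ₀]
  rw [map_add, map_add, map_mul, map_mul, hg, zero_mul, hren, hren, hX3, zero_add] at h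
  have ht : ∀ R, ττ (jj R) = jj R := fun R => DFunLike.congr_fun tau_j R
  have h2 := congrArg ττ h
  simp only [map_add, map_mul, map_neg, map_zero, ht] at h2
  rw [show (ττ (X 1) : A3) = -X 1 by simp [ττ], show (ττ (X 2) : A3) = X 2 by simp [ττ]] at h2
  have hQ' : (2 : A3) * (X 1 * X 2 : A3) * jj Q = 0 := by linear_combination h2 - h
  have hQ : jj Q = 0 :=
    (mul_eq_zero.1 hQ').resolve_left
      (mul_ne_zero two_ne_zero (mul_ne_zero (X_ne_zero _) (X_ne_zero _)))
  have hP : jj P = 0 := by linear_combination h + (X 1 * X 2 : A3) * hQ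
  rw [j_inj_aux P hP, j_inj_aux Q hQ]
  simp only [map_zero, add_zero, mul_zero]
  exact Ideal.mem_span_singleton'.2 ⟨q, mul_comm _ _⟩

lemma half4 : (C (2⁻¹:ℚ) : A4) * 2 = 1 := by
  rw [← map_ofNat (C : ℚ →+* A4) 2, ← C_mul]; norm_num
lemma quarter4 : (C (4⁻¹:ℚ) : A4) * 4 = 1 := by
  rw [← map_ofNat (C : ℚ →+* A4) 4, ← C_mul]; norm_num
lemma half3 : (C (2⁻¹:ℚ) : A3) * 2 = 1 := by
  rw [← map_ofNat (C : ℚ →+* A3) 2, ← C_mul]; norm_num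

def αm : A4 →ₐ[ℚ] A4 :=
  aeval ![X 0, 2 * X 1 + X 0 ^ 2, 4 * X 2 - X 0 ^ 2, 2 * X 3 + 2 * X 1 + X 0 ^ 2]
def αi : A4 →ₐ[ℚ] A4 :=
  aeval ![X 0, C (2⁻¹:ℚ) * (X 1 - X 0 ^ 2), C (4⁻¹:ℚ) * (X 2 + X 0 ^ 2),
    C (2⁻¹:ℚ) * (X 3 - X 1)]
def ββ : A3 →ₐ[ℚ] A3 := aeval ![X 1 + X 2, X 1 - X 2, X 1 - X 2 - 2 * X 0]
def βi : A3 →ₐ[ℚ] A3 :=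
  aeval ![C (2⁻¹:ℚ) * (X 1 - X 2), C (2⁻¹:ℚ) * (X 0 + X 1), C (2⁻¹:ℚ) * (X 0 - X 1)]
def ψψ : A4 →ₐ[ℚ] A3 :=
  aeval ![-(X 1 + X 2), -(X 1 ^ 2 + X 2 ^ 2), (X 1 - X 0) * (X 2 + X 0), X 0 * (X 1 - X 2)]

lemma am_ai : αm.comp αi = AlgHom.id ℚ A4 := by
  apply MvPolynomial.algHom_ext; intro i
  fin_cases i <;> simp [αm, αi, map_ofNat] <;>
    first
      | rfl
      | linear_combination (X 1 : A4) * half4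
      | linear_combination (X 2 : A4) * quarter4
      | linear_combination (X 3 : A4) * half4
lemma bi_b : βi.comp ββ = AlgHom.id ℚ A3 := by
  apply MvPolynomial.algHom_ext; intro i
  fin_cases i <;> simp [ββ, βi, map_ofNat] <;>
    first
      | rfl
      | linear_combination (X 0 : A3) * half3
      | linear_combination (X 1 : A3) * half3
      | linear_combination (X 2 : A3) * half3
lemma comm_lemma : ψψ.comp αm = ββ.comp ψ₀ := by
  apply MvPolynomial.algHom_ext; intro i
  fin_cases i <;> simp [ψψ, αm, ββ, ψ₀, map_ofNat] <;> ring

lemma psX0 : ψψ (X 0) = -(X 1 + X 2) := by simp [ψψ]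
lemma psX1 : ψψ (X 1) = -(X 1 ^ 2 + X 2 ^ 2) := by simp [ψψ]
lemma psX2 : ψψ (X 2) = (X 1 - X 0) * (X 2 + X 0) := by simp [ψψ]
lemma psX3 : ψψ (X 3) = X 0 * (X 1 - X 2) := by simp [ψψ]

lemma main : RingHom.ker (ψψ : A4 →ₐ[ℚ] A3) =
    Ideal.span
      {(2 * X 3 + (2 * X 1 + X 0 ^ 2)) ^ 2 -
        (2 * X 1 + X 0 ^ 2) * (4 * X 2 - X 0 ^ 2)} := by
  apply le_antisymm
  · intro F hF
    rw [RingHom.mem_ker] at hF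
    have e1 : αm (αi F) = F := DFunLike.congr_fun am_ai F
    have e2 : ββ (ψ₀ (αi F)) = 0 := by
      have := DFunLike.congr_fun comm_lemma (αi F)
      simp only [AlgHom.comp_apply] at this
      rw [← this, e1]; exact hF
    have hinj : Function.Injective ββ := by
      intro x y hxy
      have := congrArg βi hxy
      simpa only [← AlgHom.comp_apply, bi_b, AlgHom.id_apply] using this
    have h2 : ψ₀ (αi F) = 0 := hinj (by simpa using e2)
    obtain ⟨a, ha⟩ := Ideal.mem_span_singleton'.1 (core (αi F) h2)
    refine Ideal.mem_span_singleton'.2 ⟨αm a, ?_⟩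
    have hg : αm (X 3 ^ 2 - X 1 * X 2 : A4) =
        (2 * X 3 + (2 * X 1 + X 0 ^ 2)) ^ 2 -
          (2 * X 1 + X 0 ^ 2) * (4 * X 2 - X 0 ^ 2) := by
      simp [αm, map_ofNat]; ring
    calc αm a * _ = αm (a * (X 3 ^ 2 - X 1 * X 2)) := by rw [map_mul, hg]
    _ = αm (αi F) := by rw [ha]
    _ = F := e1
  · rw [Ideal.span_le, Set.singleton_subset_iff, SetLike.mem_coe, RingHom.mem_ker]
    simp only [map_sub, map_add, map_mul, map_pow, map_ofNat, psX0, psX1, psX2, psX3]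
    ring



open MvPolynomial

/-- Let `ψ : ℚ[x₁, x₂, x₃, x₄] → ℚ[r, t₁, t₂]` be the ℚ-algebra homomorphism with
`x₁ ↦ −(t₁ + t₂)`, `x₂ ↦ −(t₁² + t₂²)`, `x₃ ↦ (t₁ − r)(t₂ + r)`, `x₄ ↦ r(t₁ − t₂)`
(here `x₁ = X 0, …, x₄ = X 3` and `r = X 0`, `t₁ = X 1`, `t₂ = X 2`).  Its kernel is
the principal ideal generated by `(2x₄ + (2x₂ + x₁²))² − (2x₂ + x₁²)(4x₃ − x₁²)`. -/
theorem stmt5 :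
    RingHom.ker
        (aeval
          ![-(X 1 + X 2), -(X 1 ^ 2 + X 2 ^ 2), (X 1 - X 0) * (X 2 + X 0),
            X 0 * (X 1 - X 2)] :
          MvPolynomial (Fin 4) ℚ →ₐ[ℚ] MvPolynomial (Fin 3) ℚ) =
      Ideal.span
        {(2 * X 3 + (2 * X 1 + X 0 ^ 2)) ^ 2 -
          (2 * X 1 + X 0 ^ 2) * (4 * X 2 - X 0 ^ 2)} := main
end
end

section
/- The polynomial (2x₄ + (2x₂ + x₁²))² − (2x₂ + x₁²)(4x₃ − x₁²) is irreducible in the polynomial ring ℚ[x₁, x₂, x₃, x₄]. -/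
open MvPolynomial

theorem irr_lin {R : Type*} [CommRing R] [IsDomain R] (p : Polynomial R)
    (hd : p.natDegree = 1) (hc : ∀ r : R, Polynomial.C r ∣ p → IsUnit r) :
    Irreducible p := by
  constructor
  · exact Polynomial.not_isUnit_of_natDegree_pos p (by omega)
  · intro f g hfg
    have hp0 : p ≠ 0 := fun h => by simp [h] at hd
    have hf0 : f ≠ 0 := fun h => hp0 (by simp [hfg, h])
    have hg0 : g ≠ 0 := fun h => hp0 (by simp [hfg, h])
    have hsum : f.natDegree + g.natDegree = 1 := by
      rw [← Polynomial.natDegree_mul hf0 hg0, ← hfg, hd]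
    rcases Nat.eq_zero_or_pos f.natDegree with h | h
    · left
      have hfc := Polynomial.eq_C_of_natDegree_eq_zero h
      rw [hfc]
      exact Polynomial.isUnit_C.mpr (hc _ ⟨g, by conv_lhs => rw [hfg, hfc]⟩)
    · right
      have hg : g.natDegree = 0 := by omega
      have hgc := Polynomial.eq_C_of_natDegree_eq_zero hg
      rw [hgc]
      exact Polynomial.isUnit_C.mpr (hc _ ⟨f, by conv_lhs => rw [hfg, hgc, mul_comm]⟩)

section aux
local notation "A3" => (2 * X 2 + X 1 ^ 2 : MvPolynomial (Fin 3) ℚ)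
local notation "T3" => (2 * X 0 + (2 * X 2 + X 1 ^ 2) : MvPolynomial (Fin 3) ℚ)

lemma two_unit {n : ℕ} : IsUnit (2 : MvPolynomial (Fin n) ℚ) :=
  IsUnit.of_mul_eq_one (a := 2) (C (1/2)) (by
    rw [(map_ofNat (C : ℚ →+* MvPolynomial (Fin n) ℚ) 2).symm, ← map_mul]; norm_num)

lemma four_unit {n : ℕ} : IsUnit (4 : MvPolynomial (Fin n) ℚ) :=
  IsUnit.of_mul_eq_one (a := 4) (C (1/4)) (by
    rw [(map_ofNat (C : ℚ →+* MvPolynomial (Fin n) ℚ) 4).symm, ← map_mul]; norm_num)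

lemma hA_ne : A3 ≠ 0 := by
  intro h
  have := congrArg (eval (fun _ => (1 : ℚ))) h
  simp at this
  norm_num at this

lemma h4A_ne : -(4 * A3) ≠ 0 := by
  intro h
  have := neg_eq_zero.mp h
  exact hA_ne ((mul_eq_zero.mp this).resolve_left four_unit.ne_zero)

lemma hT_irr : Irreducible T3 := by
  rw [← MulEquiv.irreducible_iff (finSuccEquiv ℚ 2)]
  have s1 : (1 : Fin 3) = (0 : Fin 2).succ := by decide
  have s2 : (2 : Fin 3) = (1 : Fin 2).succ := by decide
  have hval : (finSuccEquiv ℚ 2) T3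
      = Polynomial.C (2 : MvPolynomial (Fin 2) ℚ) * Polynomial.X
        + Polynomial.C (2 * X 1 + X 0 ^ 2) := by
    rw [s1, s2]
    simp only [map_add, map_mul, map_pow, map_ofNat, finSuccEquiv_X_zero, finSuccEquiv_X_succ,
      map_neg, map_sub]
  rw [hval]
  set b : MvPolynomial (Fin 2) ℚ := 2 * X 1 + X 0 ^ 2 with hb
  apply irr_lin
  · exact Polynomial.natDegree_linear two_ne_zero
  · intro r hr
    rw [Polynomial.C_dvd_iff_dvd_coeff] at hr
    have h1 := hr 1
    simp only [Polynomial.coeff_add, Polynomial.coeff_C_mul, Polynomial.coeff_X_one,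
      Polynomial.coeff_C, if_neg one_ne_zero, mul_one, add_zero] at h1
    exact isUnit_of_dvd_unit h1 two_unit

lemma key : ∀ r : MvPolynomial (Fin 3) ℚ,
    r ∣ -(4 * A3) → r ∣ (T3 ^ 2 + A3 * X 1 ^ 2) → IsUnit r := by
  intro r h1 h2
  by_contra hru
  have hr0 : r ≠ 0 := by
    rintro rfl
    exact h4A_ne (zero_dvd_iff.mp h1)
  obtain ⟨p, hp, hpr⟩ := WfDvdMonoid.exists_irreducible_factor hru hr0
  have hd4T : r ∣ 4 * T3 ^ 2 := by
    have h : (4 : MvPolynomial (Fin 3) ℚ) * (T3 ^ 2 + A3 * X 1 ^ 2) + (-(4 * A3)) * X 1 ^ 2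
        = 4 * T3 ^ 2 := by ring
    rw [← h]
    exact dvd_add (Dvd.dvd.mul_left h2 4) (Dvd.dvd.mul_right h1 _)
  have hprime : Prime p := UniqueFactorizationMonoid.irreducible_iff_prime.mp hp
  have hpT : p ∣ T3 := by
    rcases hprime.dvd_mul.mp (hpr.trans hd4T) with h | h
    · exact absurd (isUnit_of_dvd_unit h four_unit) hp.not_isUnit
    · rcases hprime.dvd_mul.mp (by rwa [sq] at h) with h' | h' <;> exact h'
  have hTA : T3 ∣ -(4 * A3) := ((hp.dvd_symm hT_irr hpT).trans hpr).trans h1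
  obtain ⟨s, hs⟩ := hTA
  set f : Fin 3 → MvPolynomial (Fin 3) ℚ := ![-(C (1/2 : ℚ)) * A3, X 1, X 2] with hf
  have hφT : aeval f T3 = 0 := by
    simp only [hf, map_add, map_mul, map_pow, map_ofNat, aeval_X, Matrix.cons_val_zero,
      Matrix.cons_val_one, Matrix.head_cons, Matrix.cons_val_two, Matrix.tail_cons]
    have hC : (2 : MvPolynomial (Fin 3) ℚ) * C (1/2 : ℚ) = 1 := by
      rw [(map_ofNat (C : ℚ →+* MvPolynomial (Fin 3) ℚ) 2).symm, ← map_mul]; norm_num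
    linear_combination (-(2 * X 2 + X 1 ^ 2 : MvPolynomial (Fin 3) ℚ)) * hC
  have hφA : aeval f (-(4 * A3)) = -(4 * A3) := by
    simp only [hf, map_neg, map_add, map_mul, map_pow, map_ofNat, aeval_X, Matrix.cons_val_zero,
      Matrix.cons_val_one, Matrix.head_cons, Matrix.cons_val_two, Matrix.tail_cons]
  have hcontr := congrArg (aeval f) hs
  rw [map_mul, hφT, zero_mul, hφA] at hcontr
  exact h4A_ne hcontr
end aux

noncomputable def e4 : MvPolynomial (Fin 4) ℚ ≃ₐ[ℚ] Polynomial (MvPolynomial (Fin 3) ℚ) :=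
  (renameEquiv ℚ ((Equiv.swap (0:Fin 4) 2).trans (Equiv.swap 1 3))).trans (finSuccEquiv ℚ 3)

/-- The polynomial `(2x₄ + (2x₂ + x₁²))² − (2x₂ + x₁²)(4x₃ − x₁²)` is irreducible in
`ℚ[x₁, x₂, x₃, x₄]` (here `x₁ = X 0`, `x₂ = X 1`, `x₃ = X 2`, `x₄ = X 3`). -/
theorem stmt6 :
    Irreducible
      ((2 * X 3 + (2 * X 1 + X 0 ^ 2)) ^ 2 -
          (2 * X 1 + X 0 ^ 2) * (4 * X 2 - X 0 ^ 2) :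
        MvPolynomial (Fin 4) ℚ) := by
  rw [← MulEquiv.irreducible_iff e4]
  have hval : e4 ((2 * X 3 + (2 * X 1 + X 0 ^ 2)) ^ 2 -
          (2 * X 1 + X 0 ^ 2) * (4 * X 2 - X 0 ^ 2) : MvPolynomial (Fin 4) ℚ)
    = Polynomial.C (-(4 * (2 * X 2 + X 1 ^ 2))) * Polynomial.X
      + Polynomial.C ((2 * X 0 + (2 * X 2 + X 1 ^ 2)) ^ 2
          + (2 * X 2 + X 1 ^ 2) * X 1 ^ 2) := by
    have h0 : ((Equiv.swap (0:Fin 4) 2).trans (Equiv.swap 1 3)) 0 = 2 := by decide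
    have h1 : ((Equiv.swap (0:Fin 4) 2).trans (Equiv.swap 1 3)) 1 = 3 := by decide
    have h2 : ((Equiv.swap (0:Fin 4) 2).trans (Equiv.swap 1 3)) 2 = 0 := by decide
    have h3 : ((Equiv.swap (0:Fin 4) 2).trans (Equiv.swap 1 3)) 3 = 1 := by decide
    have s1' : (1 : Fin 4) = (0 : Fin 3).succ := by decide
    have s1 : (2 : Fin 4) = (1 : Fin 3).succ := by decide
    have s3 : (3 : Fin 4) = (2 : Fin 3).succ := by decide
    simp only [e4, AlgEquiv.trans_apply, map_sub, map_add, map_mul, map_pow, map_ofNat,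
      renameEquiv_apply, rename_X, h0, h1, h2, h3]
    rw [s1, s3, s1']
    simp only [finSuccEquiv_X_zero, finSuccEquiv_X_succ, map_sub, map_add, map_mul, map_pow,
      map_ofNat, map_neg]
    ring
  rw [hval]
  set a : MvPolynomial (Fin 3) ℚ := -(4 * (2 * X 2 + X 1 ^ 2)) with ha
  set b : MvPolynomial (Fin 3) ℚ :=
    (2 * X 0 + (2 * X 2 + X 1 ^ 2)) ^ 2 + (2 * X 2 + X 1 ^ 2) * X 1 ^ 2 with hb
  apply irr_lin
  · exact Polynomial.natDegree_linear h4A_ne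
  · intro r hr
    rw [Polynomial.C_dvd_iff_dvd_coeff] at hr
    have hc1 := hr 1
    have hc0 := hr 0
    simp only [Polynomial.coeff_add, Polynomial.coeff_C_mul, Polynomial.coeff_X_one,
      Polynomial.coeff_X_zero, Polynomial.coeff_C, if_neg one_ne_zero, if_pos rfl,
      mul_one, mul_zero, add_zero, zero_add] at hc1 hc0
    exact key r (ha ▸ hc1) (hb ▸ hc0)
end
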